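/- Index-shifting gcd identity for Fibonacci numbers: gcd(F_{i-1} + F_{j+1}, F_i - F_j) = gcd(F_{i-3} + F_{j+3}, F_{i-2} - F_{j+2}) for appropriate indices i ≥ 3, j ≥ 0 with F_i ≥ F_j. -/

import Mathlib

/-- Index-shifting gcd identity for Fibonacci numbers. -/
theorem fib_gcd_index_shift (i j : ℕ) (hi : 3 ≤ i) (hij : Nat.fib j ≤ Nat.fib i) :
    Int.gcd ((Nat.fib (i - 1) : ℤ) + (Nat.fib (j + 1) : ℤ))
        ((Nat.fib i : ℤ) - (Nat.fib j : ℤ)) =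
      Int.gcd ((Nat.fib (i - 3) : ℤ) + (Nat.fib (j + 3) : ℤ))
        ((Nat.fib (i - 2) : ℤ) - (Nat.fib (j + 2) : ℤ)) := by
  have key : ∀ a b : ℤ, Int.gcd (a + b) (a + 2 * b) = Int.gcd a b := by
    intro a b
    apply Nat.dvd_antisymm
    · have h1 : (Int.gcd (a + b) (a + 2 * b) : ℤ) ∣ (a + b) := Int.gcd_dvd_left _ _
      have h2 : (Int.gcd (a + b) (a + 2 * b) : ℤ) ∣ (a + 2 * b) := Int.gcd_dvd_right _ _
      have ha : (Int.gcd (a + b) (a + 2 * b) : ℤ) ∣ a := by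
        have := dvd_sub (h1.mul_left 2) h2
        simpa [show 2 * (a + b) - (a + 2 * b) = a by ring] using this
      have hb : (Int.gcd (a + b) (a + 2 * b) : ℤ) ∣ b := by
        have := dvd_sub h2 h1
        simpa [show (a + 2 * b) - (a + b) = b by ring] using this
      exact Int.natCast_dvd_natCast.mp (Int.dvd_coe_gcd ha hb)
    · have h1 : (Int.gcd a b : ℤ) ∣ a := Int.gcd_dvd_left _ _
      have h2 : (Int.gcd a b : ℤ) ∣ b := Int.gcd_dvd_right _ _
      exact Int.natCast_dvd_natCast.mp
        (Int.dvd_coe_gcd (dvd_add h1 h2) (dvd_add h1 (h2.mul_left 2)))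
  obtain ⟨k, rfl⟩ : ∃ k, i = k + 3 := ⟨i - 3, by omega⟩
  simp only [show k + 3 - 1 = k + 2 from rfl, show k + 3 - 2 = k + 1 from rfl,
    show k + 3 - 3 = k from rfl]
  have f1 : (Nat.fib (k + 2) : ℤ) = Nat.fib k + Nat.fib (k + 1) := by
    rw [Nat.fib_add_two]; push_cast; ring
  have f2 : (Nat.fib (k + 3) : ℤ) = Nat.fib (k + 1) + Nat.fib (k + 2) := by
    rw [show k + 3 = (k + 1) + 2 from rfl, Nat.fib_add_two]; push_cast; ring
  have f3 : (Nat.fib (j + 3) : ℤ) = Nat.fib (j + 1) + Nat.fib (j + 2) := by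
    rw [show j + 3 = (j + 1) + 2 from rfl, Nat.fib_add_two]; push_cast; ring
  have f4 : (Nat.fib (j + 2) : ℤ) = Nat.fib j + Nat.fib (j + 1) := by
    rw [Nat.fib_add_two]; push_cast; ring
  have := key ((Nat.fib k : ℤ) + Nat.fib (j + 3)) ((Nat.fib (k + 1) : ℤ) - Nat.fib (j + 2))
  rw [show ((Nat.fib k : ℤ) + Nat.fib (j + 3)) + ((Nat.fib (k + 1) : ℤ) - Nat.fib (j + 2))
      = (Nat.fib (k + 2) : ℤ) + Nat.fib (j + 1) by rw [f1, f3]; ring,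
    show ((Nat.fib k : ℤ) + Nat.fib (j + 3)) + 2 * ((Nat.fib (k + 1) : ℤ) - Nat.fib (j + 2))
      = (Nat.fib (k + 3) : ℤ) - Nat.fib j by rw [f2, f1, f3, f4]; ring] at this
  exact this
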